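/- arXiv:2106.10346 — 2 statements merged into one kernel-verified Lean document; each statement's English description precedes it below -/
import Mathlib

section
/- For the helicoid ψ(u,v) = cos(v/r)α(u) + r sin(v/r)Z(u) in S^3(r) with α(u) = r(cos(u/r), sin(u/r), 0, 0) and Z(u) = (0, 0, cos(ωu), sin(ωu)), the mixed partial inner products satisfy ⟨ψ_u, ψ_v⟩ = 0, and the mean curvature coefficient h₁₁ = ⟨ψ_uu + (g₁₁/r²)ψ, ξ⟩ vanishes, where ξ is proportional to the vector characterized by ⟨ξ, x⟩ ∝ det(ψ, ψ_u, ψ_v, x). Hence the helicoid is a minimal surface in S^3(r). -/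
/-- Euclidean inner product on `ℝ⁴`. -/
noncomputable def dot4 (u v : Fin 4 → ℝ) : ℝ := ∑ i, u i * v i

section helpers
variable {r ω x : ℝ}

lemma hd_vec4 {f0 f1 f2 f3 : ℝ → ℝ} {a b c d : ℝ}
    (h0 : HasDerivAt f0 a x) (h1 : HasDerivAt f1 b x)
    (h2 : HasDerivAt f2 c x) (h3 : HasDerivAt f3 d x) :
    HasDerivAt (fun t => ![f0 t, f1 t, f2 t, f3 t]) ![a, b, c, d] x := by
  rw [hasDerivAt_pi]
  intro i
  fin_cases i
  · simpa using h0
  · simpa using h1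
  · simpa using h2
  · simpa using h3

lemma hd_cosdiv (hr : r ≠ 0) : HasDerivAt (fun t => Real.cos (t / r)) (-(Real.sin (x / r) / r)) x := by
  have := (Real.hasDerivAt_cos (x / r)).comp x ((hasDerivAt_id x).div_const r)
  refine this.congr_deriv ?_
  field_simp

lemma hd_sindiv (hr : r ≠ 0) : HasDerivAt (fun t => Real.sin (t / r)) (Real.cos (x / r) / r) x := by
  have := (Real.hasDerivAt_sin (x / r)).comp x ((hasDerivAt_id x).div_const r)
  refine this.congr_deriv ?_
  field_simp

lemma hd_rcos (hr : r ≠ 0) : HasDerivAt (fun t => r * Real.cos (t / r)) (-Real.sin (x / r)) x := by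
  have := (hd_cosdiv (x := x) hr).const_mul r
  refine this.congr_deriv ?_
  field_simp

lemma hd_rsin (hr : r ≠ 0) : HasDerivAt (fun t => r * Real.sin (t / r)) (Real.cos (x / r)) x := by
  have := (hd_sindiv (x := x) hr).const_mul r
  refine this.congr_deriv ?_
  field_simp

lemma hd_cosw : HasDerivAt (fun t => Real.cos (ω * t)) (-(ω * Real.sin (ω * x))) x := by
  have := (Real.hasDerivAt_cos (ω * x)).comp x ((hasDerivAt_id x).const_mul ω)
  refine this.congr_deriv ?_
  ring

lemma hd_sinw : HasDerivAt (fun t => Real.sin (ω * t)) (ω * Real.cos (ω * x)) x := by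
  have := (Real.hasDerivAt_sin (ω * x)).comp x ((hasDerivAt_id x).const_mul ω)
  refine this.congr_deriv ?_
  ring

end helpers

/-- the helicoid `ψ(u,v) = cos(v/r)α(u) + r sin(v/r)Z(u)` in `S³(r)`, with
`α(u) = r(cos(u/r), sin(u/r), 0, 0)` and `Z(u) = (0, 0, cos(ωu), sin(ωu))`, satisfies
`g₁₂ = ⟨ψ_u, ψ_v⟩ = 0` and `h₁₁ = ⟨ψ_uu + (g₁₁/r²)ψ, ξ⟩ = 0` for any normal `ξ`
(`ξ` orthogonal to `ψ, ψ_u, ψ_v`); hence the helicoid is minimal. -/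
theorem helicoid_minimal (r ω : ℝ) (hr : 0 < r) :
    let α : ℝ → Fin 4 → ℝ :=
      fun u => ![r * Real.cos (u / r), r * Real.sin (u / r), 0, 0]
    let Z : ℝ → Fin 4 → ℝ :=
      fun u => ![0, 0, Real.cos (ω * u), Real.sin (ω * u)]
    let ψ : ℝ → ℝ → Fin 4 → ℝ :=
      fun u v => Real.cos (v / r) • α u + (r * Real.sin (v / r)) • Z u
    ∀ u v,
      dot4 (deriv (fun t => ψ t v) u) (deriv (fun t => ψ u t) v) = 0 ∧
      ∀ ξ : Fin 4 → ℝ,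
        dot4 ξ (ψ u v) = 0 → dot4 ξ (deriv (fun t => ψ t v) u) = 0 →
        dot4 ξ (deriv (fun t => ψ u t) v) = 0 →
        dot4 (deriv (deriv (fun t => ψ t v)) u
            + ((dot4 (deriv (fun t => ψ t v) u) (deriv (fun t => ψ t v) u) / r ^ 2))
              • ψ u v) ξ = 0 := by
  intro α Z ψ u v
  have hr0 : r ≠ 0 := ne_of_gt hr
  set D1 : ℝ → Fin 4 → ℝ := fun x =>
    Real.cos (v / r) • ![-Real.sin (x / r), Real.cos (x / r), 0, 0]
      + (r * Real.sin (v / r)) • ![0, 0, -(ω * Real.sin (ω * x)), ω * Real.cos (ω * x)] with hD1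
  have hψu : ∀ x, HasDerivAt (fun t => ψ t v) (D1 x) x := by
    intro x
    have h1 : HasDerivAt α (![-Real.sin (x / r), Real.cos (x / r), 0, 0]) x :=
      hd_vec4 (hd_rcos hr0) (hd_rsin hr0) (hasDerivAt_const _ _) (hasDerivAt_const _ _)
    have h2 : HasDerivAt Z (![0, 0, -(ω * Real.sin (ω * x)), ω * Real.cos (ω * x)]) x :=
      hd_vec4 (hasDerivAt_const _ _) (hasDerivAt_const _ _) hd_cosw hd_sinw
    exact (h1.const_smul (Real.cos (v / r))).add (h2.const_smul (r * Real.sin (v / r)))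
  have e1 : deriv (fun t => ψ t v) u = D1 u := (hψu u).deriv
  have e1' : deriv (fun t => ψ t v) = D1 := funext fun x => (hψu x).deriv
  have hψuu : HasDerivAt D1
      (Real.cos (v / r) • ![-(Real.cos (u / r) / r), -(Real.sin (u / r) / r), 0, 0]
        + (r * Real.sin (v / r)) • ![0, 0, -(ω * (ω * Real.cos (ω * u))), ω * -(ω * Real.sin (ω * u))]) u := by
    have h1 : HasDerivAt (fun x : ℝ => ![-Real.sin (x / r), Real.cos (x / r), (0:ℝ), 0])
        (![-(Real.cos (u / r) / r), -(Real.sin (u / r) / r), 0, 0]) u :=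
      hd_vec4 ((hd_sindiv hr0).neg) (hd_cosdiv hr0) (hasDerivAt_const _ _) (hasDerivAt_const _ _)
    have h2 : HasDerivAt (fun x : ℝ => ![(0:ℝ), 0, -(ω * Real.sin (ω * x)), ω * Real.cos (ω * x)])
        (![0, 0, -(ω * (ω * Real.cos (ω * u))), ω * -(ω * Real.sin (ω * u))]) u :=
      hd_vec4 (hasDerivAt_const _ _) (hasDerivAt_const _ _) ((hd_sinw.const_mul ω).neg) (hd_cosw.const_mul ω)
    exact (h1.const_smul (Real.cos (v / r))).add (h2.const_smul (r * Real.sin (v / r)))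
  have e2 : deriv (deriv (fun t => ψ t v)) u
      = Real.cos (v / r) • ![-(Real.cos (u / r) / r), -(Real.sin (u / r) / r), 0, 0]
        + (r * Real.sin (v / r)) • ![0, 0, -(ω * (ω * Real.cos (ω * u))), ω * -(ω * Real.sin (ω * u))] := by
    rw [e1']; exact hψuu.deriv
  have hψv : HasDerivAt (fun t => ψ u t)
      ((-(Real.sin (v / r) / r)) • α u + Real.cos (v / r) • Z u) v :=
    ((hd_cosdiv hr0).smul_const (α u)).add ((hd_rsin hr0).smul_const (Z u))
  have e3 : deriv (fun t => ψ u t) v = (-(Real.sin (v / r) / r)) • α u + Real.cos (v / r) • Z u :=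
    hψv.deriv
  refine ⟨?_, ?_⟩
  · rw [e1, e3]
    simp only [hD1, dot4, ψ, α, Z, Fin.sum_univ_four, Pi.add_apply, Pi.smul_apply,
      Matrix.cons_val_zero, Matrix.cons_val_one, Matrix.head_cons, Matrix.cons_val_two,
      Matrix.tail_cons, Matrix.cons_val_three, smul_eq_mul]
    ring
  · intro ξ h1 h2 h3
    rw [e1] at h2 ⊢
    rw [e3] at h3
    rw [e2]
    simp only [hD1, dot4, ψ, α, Z, Fin.sum_univ_four, Pi.add_apply, Pi.smul_apply,
      Matrix.cons_val_zero, Matrix.cons_val_one, Matrix.head_cons, Matrix.cons_val_two,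
      Matrix.tail_cons, Matrix.cons_val_three, smul_eq_mul] at h1 h2 h3 ⊢
    field_simp at h3 ⊢
    rw [mul_comm u ω] at h3 ⊢
    have pv := Real.sin_sq_add_cos_sq (v / r)
    have hA : r ^ 2 * Real.cos (u / r) * ξ 0 + r ^ 2 * Real.sin (u / r) * ξ 1 = 0 := by
      linear_combination (r * Real.cos (v / r)) * h1 - (r * Real.sin (v / r)) * h3
        - (r ^ 2 * Real.cos (u / r) * ξ 0 + r ^ 2 * Real.sin (u / r) * ξ 1) * pv
    have hB : r ^ 2 * Real.cos (ω * u) * ξ 2 + r ^ 2 * Real.sin (ω * u) * ξ 3 = 0 := by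
      linear_combination (r * Real.sin (v / r)) * h1 + (r * Real.cos (v / r)) * h3
        - (r ^ 2 * Real.cos (ω * u) * ξ 2 + r ^ 2 * Real.sin (ω * u) * ξ 3) * pv
    linear_combination (norm := (field_simp; ring))
      (Real.cos (v / r) / r *
        ((Real.cos (v / r) ^ 2 * Real.sin (u / r) ^ 2 + Real.cos (v / r) ^ 2 * Real.cos (u / r) ^ 2
          + r ^ 2 * Real.sin (v / r) ^ 2 * ω ^ 2 * Real.sin (ω * u) ^ 2
          + r ^ 2 * Real.sin (v / r) ^ 2 * ω ^ 2 * Real.cos (ω * u) ^ 2) - 1)) * hA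
      + (Real.sin (v / r) / r *
        ((Real.cos (v / r) ^ 2 * Real.sin (u / r) ^ 2 + Real.cos (v / r) ^ 2 * Real.cos (u / r) ^ 2
          + r ^ 2 * Real.sin (v / r) ^ 2 * ω ^ 2 * Real.sin (ω * u) ^ 2
          + r ^ 2 * Real.sin (v / r) ^ 2 * ω ^ 2 * Real.cos (ω * u) ^ 2) - ω ^ 2 * r ^ 2)) * hB
end

section
/- Let α : I → S^3(r) be a unit-speed curve and Z a unit tangent vector field along α. The curve β(u) = cos(v(u)/r)α(u) + r sin(v(u)/r)Z(u), with v(u) = (r/2)·arctan( −(2/r)⟨α', ∇_{α'}Z⟩ / (⟨∇_{α'}Z, ∇_{α'}Z⟩ − g(u,0)/r²) ), satisfies the striction condition ⟨β', ∇_{β'}PZ⟩ = 0, where PZ(u) = −(1/r)sin(v(u)/r)α(u) + cos(v(u)/r)Z(u) and g(u,0) = 1 − ⟨α'(u),Z(u)⟩². -/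
lemma dot4_add_left (x y z : Fin 4 → ℝ) : dot4 (x + y) z = dot4 x z + dot4 y z := by
  simp [dot4, add_mul, Finset.sum_add_distrib]

lemma dot4_add_right (x y z : Fin 4 → ℝ) : dot4 x (y + z) = dot4 x y + dot4 x z := by
  simp [dot4, mul_add, Finset.sum_add_distrib]

lemma dot4_smul_left (c : ℝ) (x z : Fin 4 → ℝ) : dot4 (c • x) z = c * dot4 x z := by
  simp only [dot4, Pi.smul_apply, smul_eq_mul, Finset.mul_sum]
  exact Finset.sum_congr rfl fun i _ => by ring

lemma dot4_smul_right (c : ℝ) (x z : Fin 4 → ℝ) : dot4 x (c • z) = c * dot4 x z := by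
  simp only [dot4, Pi.smul_apply, smul_eq_mul, Finset.mul_sum]
  exact Finset.sum_congr rfl fun i _ => by ring

lemma dot4_comm (x y : Fin 4 → ℝ) : dot4 x y = dot4 y x := by
  simp [dot4, mul_comm]

lemma hasDerivAt_dot4 {f g : ℝ → Fin 4 → ℝ} {f' g' : Fin 4 → ℝ} {u : ℝ}
    (hf : HasDerivAt f f' u) (hg : HasDerivAt g g' u) :
    HasDerivAt (fun t => dot4 (f t) (g t)) (dot4 f' (g u) + dot4 (f u) g') u := by
  have h : dot4 f' (g u) + dot4 (f u) g' = ∑ i : Fin 4, (f' i * g u i + f u i * g' i) := by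
    simp [dot4, Finset.sum_add_distrib]
  rw [h]
  simp only [dot4]
  exact HasDerivAt.fun_sum fun i _ => (hasDerivAt_pi.mp hf i).mul (hasDerivAt_pi.mp hg i)

lemma differentiableAt_dot4 {f g : ℝ → Fin 4 → ℝ} {u : ℝ}
    (hf : DifferentiableAt ℝ f u) (hg : DifferentiableAt ℝ g u) :
    DifferentiableAt ℝ (fun t => dot4 (f t) (g t)) u :=
  (hasDerivAt_dot4 hf.hasDerivAt hg.hasDerivAt).differentiableAt

lemma deriv_diff_of_contDiff2 {f : ℝ → Fin 4 → ℝ} (hf : ContDiff ℝ 2 f) :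
    Differentiable ℝ (deriv f) := by
  have h2 : ((1:ℕ∞) + 1 : WithTop ℕ∞) = 2 := by norm_num
  rw [← h2] at hf
  exact ((contDiff_succ_iff_deriv.mp hf).2.2).differentiable (by simp)

lemma key_scalar (r b w : ℝ) (hr : 0 < r) (hD : w - 1 / r ^ 2 ≠ 0) :
    r * b * (2 * Real.cos (Real.arctan (-(2 / r) * b / (w - 1 / r ^ 2)) / 2) ^ 2 - 1)
      + Real.sin (Real.arctan (-(2 / r) * b / (w - 1 / r ^ 2)) / 2)
        * Real.cos (Real.arctan (-(2 / r) * b / (w - 1 / r ^ 2)) / 2) * (r ^ 2 * w - 1) = 0 := by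
  have hrne : r ≠ 0 := ne_of_gt hr
  have hD' : r ^ 2 * w - 1 ≠ 0 := by
    have h := mul_ne_zero (pow_ne_zero 2 hrne) hD
    have h2 : r ^ 2 * (w - 1 / r ^ 2) = r ^ 2 * w - 1 := by field_simp
    rwa [h2] at h
  set φ := Real.arctan (-(2 / r) * b / (w - 1 / r ^ 2)) with hφ
  have h2φ : 2 * (φ / 2) = φ := by ring
  have hcos2 : Real.cos φ = 2 * Real.cos (φ / 2) ^ 2 - 1 := by
    have h := Real.cos_two_mul (φ / 2); rwa [h2φ] at h
  have hsin2 : Real.sin φ = 2 * (Real.sin (φ / 2) * Real.cos (φ / 2)) := by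
    have h := Real.sin_two_mul (φ / 2); rw [h2φ] at h; rw [h]; ring
  have hθeq : -(2 / r) * b / (w - 1 / r ^ 2) = -2 * b * r / (r ^ 2 * w - 1) := by
    rw [div_eq_div_iff hD hD']; field_simp
  have hcos : Real.cos φ = 1 / Real.sqrt (1 + (-2 * b * r / (r ^ 2 * w - 1)) ^ 2) := by
    rw [hφ, hθeq, Real.cos_arctan]
  have hsin : Real.sin φ = (-2 * b * r / (r ^ 2 * w - 1))
      / Real.sqrt (1 + (-2 * b * r / (r ^ 2 * w - 1)) ^ 2) := by
    rw [hφ, hθeq, Real.sin_arctan]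
  have hs : Real.sqrt (1 + (-2 * b * r / (r ^ 2 * w - 1)) ^ 2) ≠ 0 := by positivity
  set S := Real.sqrt (1 + (-2 * b * r / (r ^ 2 * w - 1)) ^ 2) with hS
  have hx : -2 * b * r / (r ^ 2 * w - 1) * (r ^ 2 * w - 1) = -2 * b * r :=
    div_mul_cancel₀ _ hD'
  have key : r * b * Real.cos φ + Real.sin φ / 2 * (r ^ 2 * w - 1) = 0 := by
    rw [hcos, hsin]
    have hsplit : r * b * (1 / S) + -2 * b * r / (r ^ 2 * w - 1) / S / 2 * (r ^ 2 * w - 1)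
        = (r * b + -2 * b * r / (r ^ 2 * w - 1) * (r ^ 2 * w - 1) / 2) / S := by ring
    rw [hsplit, hx, show r * b + -2 * b * r / 2 = 0 by ring, zero_div]
  rw [hcos2, hsin2] at key
  linear_combination key

/-- Prop. 3.4, existence of the striction curve: with
`∇_{α'}Z = Z' + (1/r²)⟨α',Z⟩α` (Gauss formula on `S³(r)`),
`v(u) = (r/2)arctan(−(2/r)⟨α',∇_{α'}Z⟩ / (⟨∇_{α'}Z,∇_{α'}Z⟩ − g(u,0)/r²))` where
`g(u,0) = 1 − ⟨α',Z⟩²` (the denominator being assumed nonzero), the curve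
`β(u) = cos(v(u)/r)α(u) + r sin(v(u)/r)Z(u)` satisfies the striction condition
`⟨β', ∇_{β'}PZ⟩ = 0`, where `PZ(u) = −(1/r)sin(v(u)/r)α(u) + cos(v(u)/r)Z(u)`. -/
theorem striction_curve_exists (r : ℝ) (hr : 0 < r) (α Z : ℝ → Fin 4 → ℝ)
    (hα : ContDiff ℝ 2 α) (hZ : ContDiff ℝ 2 Z)
    (hsph : ∀ u, dot4 (α u) (α u) = r ^ 2)
    (hunit : ∀ u, dot4 (deriv α u) (deriv α u) = 1)
    (hZ1 : ∀ u, dot4 (Z u) (Z u) = 1)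
    (hZα : ∀ u, dot4 (Z u) (α u) = 0) :
    let DZ : ℝ → Fin 4 → ℝ :=
      fun u => deriv Z u + ((1 / r ^ 2) * dot4 (deriv α u) (Z u)) • α u
    let v : ℝ → ℝ :=
      fun u => (r / 2) * Real.arctan (-(2 / r) * dot4 (deriv α u) (DZ u)
        / (dot4 (DZ u) (DZ u) - (1 - dot4 (deriv α u) (Z u) ^ 2) / r ^ 2))
    let β : ℝ → Fin 4 → ℝ :=
      fun u => Real.cos (v u / r) • α u + (r * Real.sin (v u / r)) • Z u
    let PZ : ℝ → Fin 4 → ℝ :=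
      fun u => (-(1 / r) * Real.sin (v u / r)) • α u + Real.cos (v u / r) • Z u
    (∀ u, dot4 (DZ u) (DZ u) - (1 - dot4 (deriv α u) (Z u) ^ 2) / r ^ 2 ≠ 0) →
    ∀ u, dot4 (deriv β u)
        (deriv PZ u + ((1 / r ^ 2) * dot4 (deriv β u) (PZ u)) • β u) = 0 := by
  intro DZ v β PZ hden u
  have hrne : r ≠ 0 := ne_of_gt hr
  have hαd : Differentiable ℝ α := hα.differentiable (by norm_num)
  have hZd : Differentiable ℝ Z := hZ.differentiable (by norm_num)
  have hα2 : Differentiable ℝ (deriv α) := deriv_diff_of_contDiff2 hα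
  have hZ2 : Differentiable ℝ (deriv Z) := deriv_diff_of_contDiff2 hZ
  have hAA : ∀ t, HasDerivAt α (deriv α t) t := fun t => (hαd t).hasDerivAt
  have hZZ : ∀ t, HasDerivAt Z (deriv Z t) t := fun t => (hZd t).hasDerivAt
  -- pointwise identities
  have hA'a : dot4 (deriv α u) (α u) = 0 := by
    have h1 := hasDerivAt_dot4 (hAA u) (hAA u)
    have h2 : HasDerivAt (fun t => dot4 (α t) (α t)) 0 u := by
      have he : (fun t => dot4 (α t) (α t)) = fun _ => r ^ 2 := funext hsph
      rw [he]; exact hasDerivAt_const u _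
    have h3 := h1.unique h2
    have hc := dot4_comm (α u) (deriv α u)
    linarith
  have hZ'z : dot4 (deriv Z u) (Z u) = 0 := by
    have h1 := hasDerivAt_dot4 (hZZ u) (hZZ u)
    have h2 : HasDerivAt (fun t => dot4 (Z t) (Z t)) 0 u := by
      have he : (fun t => dot4 (Z t) (Z t)) = fun _ => 1 := funext hZ1
      rw [he]; exact hasDerivAt_const u _
    have h3 := h1.unique h2
    have hc := dot4_comm (Z u) (deriv Z u)
    linarith
  have hZ'a : dot4 (deriv Z u) (α u) = -dot4 (deriv α u) (Z u) := by
    have h1 := hasDerivAt_dot4 (hZZ u) (hAA u)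
    have h2 : HasDerivAt (fun t => dot4 (Z t) (α t)) 0 u := by
      have he : (fun t => dot4 (Z t) (α t)) = fun _ => 0 := funext hZα
      rw [he]; exact hasDerivAt_const u _
    have h3 := h1.unique h2
    have hc := dot4_comm (Z u) (deriv α u)
    linarith
  set a := dot4 (deriv α u) (Z u) with ha
  set b := dot4 (deriv α u) (deriv Z u) with hb
  set w := dot4 (deriv Z u) (deriv Z u) with hw
  have haa : dot4 (α u) (α u) = r ^ 2 := hsph u
  have haA' : dot4 (α u) (deriv α u) = 0 := by rw [dot4_comm]; exact hA'a
  have hzz : dot4 (Z u) (Z u) = 1 := hZ1 u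
  have hza : dot4 (Z u) (α u) = 0 := hZα u
  have haz : dot4 (α u) (Z u) = 0 := by rw [dot4_comm]; exact hza
  have hza' : dot4 (Z u) (deriv α u) = a := by rw [dot4_comm]
  have haz' : dot4 (α u) (deriv Z u) = -a := by rw [dot4_comm]; exact hZ'a
  have hzz' : dot4 (Z u) (deriv Z u) = 0 := by rw [dot4_comm]; exact hZ'z
  have hz'a' : dot4 (deriv Z u) (deriv α u) = b := by rw [dot4_comm]
  have ha'a' : dot4 (deriv α u) (deriv α u) = 1 := hunit u
  -- value of the arctan argument
  have hnumval : dot4 (deriv α u) (DZ u) = b := by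
    simp only [DZ, dot4_add_right, dot4_smul_right, haz, hA'a, ← ha, ← hb]
    ring
  have hdenval : dot4 (DZ u) (DZ u) - (1 - dot4 (deriv α u) (Z u) ^ 2) / r ^ 2
      = w - 1 / r ^ 2 := by
    simp only [DZ, dot4_add_left, dot4_add_right, dot4_smul_left, dot4_smul_right,
      haa, hZ'a, haz', hzz', hza, ← ha, ← hw]
    field_simp
    ring
  have hwD : w - 1 / r ^ 2 ≠ 0 := hdenval ▸ hden u
  -- differentiability of v
  have hDZdiff : DifferentiableAt ℝ DZ u := by
    simp only [DZ]
    exact (hZ2 u).add (((differentiableAt_dot4 (hα2 u) (hZd u)).const_mul _).smul (hαd u))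
  have hvdiff : DifferentiableAt ℝ v u := by
    simp only [v]
    have hN : DifferentiableAt ℝ (fun t => -(2 / r) * dot4 (deriv α t) (DZ t)) u :=
      (differentiableAt_dot4 (hα2 u) hDZdiff).const_mul _
    have hD : DifferentiableAt ℝ
        (fun t => dot4 (DZ t) (DZ t) - (1 - dot4 (deriv α t) (Z t) ^ 2) / r ^ 2) u :=
      (differentiableAt_dot4 hDZdiff hDZdiff).sub
        (((differentiableAt_const 1).sub ((differentiableAt_dot4 (hα2 u) (hZd u)).pow 2)).div_const _)
    exact ((hN.div hD (hden u)).arctan).const_mul _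
  have hv : HasDerivAt v (deriv v u) u := hvdiff.hasDerivAt
  have hvr : HasDerivAt (fun t => v t / r) (deriv v u / r) u := hv.div_const r
  have hcosv : HasDerivAt (fun t => Real.cos (v t / r))
      (-Real.sin (v u / r) * (deriv v u / r)) u := hvr.cos
  have hsinv : HasDerivAt (fun t => Real.sin (v t / r))
      (Real.cos (v u / r) * (deriv v u / r)) u := hvr.sin
  have hβ : HasDerivAt β
      (Real.cos (v u / r) • deriv α u + (-Real.sin (v u / r) * (deriv v u / r)) • α u
        + ((r * Real.sin (v u / r)) • deriv Z u
          + (r * (Real.cos (v u / r) * (deriv v u / r))) • Z u)) u :=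
    (hcosv.smul (hAA u)).add ((hsinv.const_mul r).smul (hZZ u))
  have hPZ : HasDerivAt PZ
      ((-(1 / r) * Real.sin (v u / r)) • deriv α u
        + (-(1 / r) * (Real.cos (v u / r) * (deriv v u / r))) • α u
        + (Real.cos (v u / r) • deriv Z u + (-Real.sin (v u / r) * (deriv v u / r)) • Z u)) u :=
    ((hsinv.const_mul (-(1 / r))).smul (hAA u)).add (hcosv.smul (hZZ u))
  rw [hβ.deriv, hPZ.deriv]
  -- rewrite v u
  have hvu : v u = (r / 2) * Real.arctan (-(2 / r) * b / (w - 1 / r ^ 2)) := by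
    simp only [v]
    rw [hnumval, hdenval]
  have hhalf : (r / 2) * Real.arctan (-(2 / r) * b / (w - 1 / r ^ 2)) / r
      = Real.arctan (-(2 / r) * b / (w - 1 / r ^ 2)) / 2 := by
    field_simp
  rw [hvu, hhalf]
  set φ := Real.arctan (-(2 / r) * b / (w - 1 / r ^ 2)) with hφ
  set s := Real.sin (φ / 2) with hs
  set c := Real.cos (φ / 2) with hc
  have hpyth : s ^ 2 + c ^ 2 = 1 := Real.sin_sq_add_cos_sq _
  have hkey := key_scalar r b w hr hwD
  rw [← hφ, ← hs, ← hc] at hkey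
  simp only [β, PZ, dot4_add_left, dot4_add_right, dot4_smul_left, dot4_smul_right,
    haa, hA'a, haA', hzz, hza, haz, hza', haz', hzz', hZ'z, hZ'a, hz'a', ha'a',
    ← ha, ← hb, ← hw, hvu, hhalf, ← hφ, ← hs, ← hc]
  set vd := deriv v u with hvd
  field_simp
  linear_combination r ^ 2 * hkey - b * r ^ 3 * hpyth
end
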